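/- Work in the Euclidean plane ℝ² with the standard inner product, and let β ≥ 0. Let U = ℝ × {0} and V = {(x, y) ∈ ℝ² : β + exp(x) ≤ y}. Then: (i) V − U = {(s, t) ∈ ℝ² : t > β}, so the closure of V − U is ℝ × [β, ∞); (ii) the minimal-norm element of the closure of V − U (i.e., the infimal displacement vector g of the Douglas–Rachford operator of (N_U, N_V)) is g = (0, β); and (iii) V ∩ (g + U) = ∅, so the normal problem associated with (N_U, N_V) has no solution (equivalently, P_V ∘ P_U has no fixed point). -/

import Mathlib

open Pointwise
open scoped RealInnerProductSpace

/-- The point of `ℝ²` with coordinates `a` and `b`. -/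
def planePt (a b : ℝ) : EuclideanSpace ℝ (Fin 2) := WithLp.toLp 2 ![a, b]

lemma coord_le_norm (d : EuclideanSpace ℝ (Fin 2)) : |d 1| ≤ ‖d‖ := by
  rw [EuclideanSpace.norm_eq, Fin.sum_univ_two]
  rw [← Real.sqrt_sq_eq_abs]
  apply Real.sqrt_le_sqrt
  have := sq_nonneg (d 0)
  simp [Real.norm_eq_abs, sq_abs]
  nlinarith

/-- In `ℝ²`, with `U = ℝ × {0}` and `V = {(x,y) : β + exp x ≤ y}`
(`β ≥ 0`): (i) `V - U = ℝ × (β,∞)`, so `closure (V - U) = ℝ × [β,∞)`;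
(ii) the minimal-norm element of `closure (V - U)` (the infimal displacement vector of
the Douglas–Rachford operator of `(N_U, N_V)`) is `g = (0, β)`;
(iii) `V ∩ (g + U) = ∅`, so the normal problem has no solution. -/
theorem stmt16 (β : ℝ) (hβ : 0 ≤ β)
    (U V : Set (EuclideanSpace ℝ (Fin 2)))
    (hU : U = {p : EuclideanSpace ℝ (Fin 2) | p 1 = 0})
    (hV : V = {p : EuclideanSpace ℝ (Fin 2) | β + Real.exp (p 0) ≤ p 1}) :
    (V - U = {p : EuclideanSpace ℝ (Fin 2) | β < p 1}) ∧
    (closure (V - U) = {p : EuclideanSpace ℝ (Fin 2) | β ≤ p 1}) ∧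
    (planePt 0 β ∈ closure (V - U) ∧
      ∀ d ∈ closure (V - U), ‖planePt 0 β‖ ≤ ‖d‖) ∧
    (V ∩ ((fun u => planePt 0 β + u) '' U) = ∅) := by
  have hcont : Continuous fun p : EuclideanSpace ℝ (Fin 2) => p 1 := by
    exact (EuclideanSpace.proj (1 : Fin 2)).continuous
  -- (i)
  have hsub : V - U = {p : EuclideanSpace ℝ (Fin 2) | β < p 1} := by
    ext p
    constructor
    · rintro ⟨v, hv, u, hu, rfl⟩
      rw [hV] at hv; rw [hU] at hu
      have : (v - u) 1 = v 1 - u 1 := rfl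
      have hexp := Real.exp_pos (v 0)
      simp only [Set.mem_setOf_eq] at hv hu ⊢
      rw [this, hu]
      linarith
    · intro hp
      simp only [Set.mem_setOf_eq] at hp
      refine ⟨WithLp.toLp 2 ![Real.log (p 1 - β), p 1], ?_, WithLp.toLp 2 ![Real.log (p 1 - β) - p 0, 0], ?_, ?_⟩
      · rw [hV]
        simp only [Set.mem_setOf_eq, Matrix.cons_val_zero, Matrix.cons_val_one, Matrix.head_cons]
        rw [Real.exp_log (by linarith)]
        linarith
      · rw [hU]
        simp [Set.mem_setOf_eq]
      · ext i
        fin_cases i <;> simp [planePt]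
  -- closure
  have hclos : closure (V - U) = {p : EuclideanSpace ℝ (Fin 2) | β ≤ p 1} := by
    rw [hsub]
    apply Set.Subset.antisymm
    · have hcl : IsClosed {p : EuclideanSpace ℝ (Fin 2) | β ≤ p 1} :=
        isClosed_le continuous_const hcont
      exact closure_minimal (fun p (hp : β < p 1) => le_of_lt hp) hcl
    · intro p hp
      simp only [Set.mem_setOf_eq] at hp
      have htend : Filter.Tendsto
          (fun n : ℕ => p + ((n : ℝ) + 1)⁻¹ • EuclideanSpace.single (1 : Fin 2) (1 : ℝ))
          Filter.atTop (nhds p) := by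
        have h0 : Filter.Tendsto (fun n : ℕ => ((n : ℝ) + 1)⁻¹) Filter.atTop (nhds 0) :=
          tendsto_one_div_add_atTop_nhds_zero_nat.congr (fun n => by rw [one_div])
        have := (h0.smul_const (EuclideanSpace.single (1 : Fin 2) (1 : ℝ))).const_add p
        simpa using this
      refine mem_closure_of_tendsto htend (Filter.Eventually.of_forall fun n => ?_)
      simp only [Set.mem_setOf_eq]
      have : ((p + ((n : ℝ) + 1)⁻¹ • EuclideanSpace.single (1 : Fin 2) (1 : ℝ)) : EuclideanSpace ℝ (Fin 2)) 1
          = p 1 + ((n : ℝ) + 1)⁻¹ := by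
        simp [EuclideanSpace.single_apply]
      rw [this]
      have hpos : (0 : ℝ) < ((n : ℝ) + 1)⁻¹ := by positivity
      linarith
  -- norm of g
  have hnorm : ‖planePt 0 β‖ = β := by
    rw [EuclideanSpace.norm_eq]
    simp [planePt, Fin.sum_univ_two, Real.norm_eq_abs, abs_of_nonneg hβ]
    rw [Real.sqrt_sq hβ]
  refine ⟨hsub, hclos, ⟨?_, ?_⟩, ?_⟩
  · rw [hclos]
    simp [planePt]
  · intro d hd
    rw [hclos] at hd
    simp only [Set.mem_setOf_eq] at hd
    rw [hnorm]
    calc β ≤ d 1 := hd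
      _ ≤ |d 1| := le_abs_self _
      _ ≤ ‖d‖ := coord_le_norm d
  · ext p
    simp only [Set.mem_inter_iff, Set.mem_image, Set.mem_empty_iff_false, iff_false]
    rintro ⟨hpV, u, hu, rfl⟩
    rw [hV] at hpV; rw [hU] at hu
    simp only [Set.mem_setOf_eq] at hpV hu
    have h1 : (planePt 0 β + u) 1 = β + u 1 := by simp [planePt]
    rw [h1, hu] at hpV
    have := Real.exp_pos ((planePt 0 β + u) 0)
    linarith
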